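/- arXiv:1212.5666 — 4 statements merged into one kernel-verified Lean document; each statement's English description precedes it below -/
import Mathlib

section
/- Let (X, 𝓑, μ) be a measure space embedded in a measure space (Y, 𝓒, λ), and let p ∈ Y \ X be a point such that every C ∈ 𝓒 containing p satisfies C ∩ X ≠ ∅. Then 𝓤ₚ = {C ∩ X : p ∈ C ∈ 𝓒} is an ultrafilter in 𝓑 with the countable intersection property. -/
open Set MeasureTheory

/-- A filter in the family `S` (the σ-algebra, viewed as a set of sets):
a nonempty collection of nonempty members of `S`, closed under finite
intersections and upward closed in `S`. -/
def IsMFilter {α : Type*} (S F : Set (Set α)) : Prop :=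
  F.Nonempty ∧ F ⊆ S ∧ ∅ ∉ F ∧
    (∀ A ∈ F, ∀ B ∈ F, A ∩ B ∈ F) ∧
    (∀ A ∈ F, ∀ B ∈ S, A ⊆ B → B ∈ F)

/-- An ultrafilter in `S`: a maximal filter in `S` with respect to inclusion. -/
def IsMUltrafilter {α : Type*} (S F : Set (Set α)) : Prop :=
  IsMFilter S F ∧ ∀ G : Set (Set α), IsMFilter S G → F ⊆ G → G = F

/-- Countable intersection property. -/
def HasCIP {α : Type*} (F : Set (Set α)) : Prop :=
  ∀ f : ℕ → Set α, (∀ n, f n ∈ F) → (⋂ n, f n).Nonempty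

/-- A family of sets is free if it has empty intersection. -/
def IsFree {α : Type*} (F : Set (Set α)) : Prop := ⋂₀ F = ∅

theorem stmt7 {Y : Type*} [MeasurableSpace Y] (X : Set Y)
    (μ : Measure X) (lam : Measure Y)
    (hemb : ∀ C : Set Y, MeasurableSet C → μ (Subtype.val ⁻¹' C) = lam C)
    (p : Y) (hp : p ∉ X)
    (hpX : ∀ C : Set Y, MeasurableSet C → p ∈ C → (C ∩ X).Nonempty) :
    IsMUltrafilter {B : Set Y | ∃ C : Set Y, MeasurableSet C ∧ B = C ∩ X}
        {B : Set Y | ∃ C : Set Y, MeasurableSet C ∧ p ∈ C ∧ B = C ∩ X} ∧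
      HasCIP {B : Set Y | ∃ C : Set Y, MeasurableSet C ∧ p ∈ C ∧ B = C ∩ X} := by
  set S := {B : Set Y | ∃ C : Set Y, MeasurableSet C ∧ B = C ∩ X} with hS
  set F := {B : Set Y | ∃ C : Set Y, MeasurableSet C ∧ p ∈ C ∧ B = C ∩ X} with hF
  have hfil : IsMFilter S F := by
    refine ⟨⟨X, univ, MeasurableSet.univ, trivial, (univ_inter X).symm⟩,
      ?_, ?_, ?_, ?_⟩
    · rintro B ⟨C, hC, _, rfl⟩; exact ⟨C, hC, rfl⟩
    · rintro ⟨C, hC, hpC, hCe⟩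
      exact absurd (hpX C hC hpC) (by rw [← hCe]; simp [Set.not_nonempty_empty])
    · rintro A ⟨C, hC, hpC, rfl⟩ B ⟨D, hD, hpD, rfl⟩
      exact ⟨C ∩ D, hC.inter hD, ⟨hpC, hpD⟩, by rw [inter_inter_inter_comm, inter_self]⟩
    · rintro A ⟨C, hC, hpC, rfl⟩ B ⟨D, hD, rfl⟩ hAB
      refine ⟨D ∪ C, hD.union hC, Or.inr hpC, ?_⟩
      rw [union_inter_distrib_right]
      exact (union_eq_self_of_subset_right hAB).symm
  refine ⟨⟨hfil, ?_⟩, ?_⟩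
  · intro G hG hFG
    apply Set.Subset.antisymm _ hFG
    intro B hB
    obtain ⟨C, hC, rfl⟩ := hG.2.1 hB
    by_cases hpC : p ∈ C
    · exact ⟨C, hC, hpC, rfl⟩
    · exfalso
      have h1 : Cᶜ ∩ X ∈ G := hFG ⟨Cᶜ, hC.compl, hpC, rfl⟩
      have h2 := hG.2.2.2.1 _ hB _ h1
      have : (C ∩ X) ∩ (Cᶜ ∩ X) = ∅ := by
        ext y; simp only [mem_inter_iff, mem_compl_iff, mem_empty_iff_false, iff_false]
        tauto
      rw [this] at h2
      exact hG.2.2.1 h2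
  · intro f hf
    choose C hC hpC hfC using hf
    have : ((⋂ n, C n) ∩ X).Nonempty :=
      hpX _ (MeasurableSet.iInter hC) (mem_iInter.2 hpC)
    obtain ⟨y, hy1, hy2⟩ := this
    exact ⟨y, mem_iInter.2 fun n => by rw [hfC n]; exact ⟨mem_iInter.1 hy1 n, hy2⟩⟩
end

section
/- Let (X, 𝓑) be embedded in (Y, 𝓒) (X ⊆ Y and 𝓑 = {C ∩ X : C ∈ 𝓒}) with Y \ X countable. If there is no free ultrafilter in 𝓑 with the countable intersection property, then there is no free ultrafilter in 𝓒 with the countable intersection property. -/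
open Set MeasureTheory

/-- A countable intersection of members of a free filter with CIP cannot be countable. -/
lemma aux_cip {α : Type*} {F : Set (Set α)} (hfree : IsFree F) (hcip : HasCIP F)
    (hint : ∀ A ∈ F, ∀ B ∈ F, A ∩ B ∈ F)
    (f : ℕ → Set α) (hf : ∀ n, f n ∈ F) : ¬ (⋂ n, f n).Countable := by
  intro hcount
  have hne : (⋂ n, f n).Nonempty := hcip f hf
  obtain ⟨e, he⟩ := hcount.exists_eq_range hne
  have hg : ∀ y : α, ∃ A ∈ F, y ∉ A := by
    intro y
    have hy : y ∉ ⋂₀ F := by rw [hfree]; exact notMem_empty y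
    simpa [mem_sInter] using hy
  choose g hg1 hg2 using hg
  obtain ⟨y, hy⟩ := hcip (fun n => f n ∩ g (e n))
    (fun n => hint _ (hf n) _ (hg1 (e n)))
  have hyS : y ∈ ⋂ n, f n := mem_iInter.2 fun n => (mem_iInter.1 hy n).1
  rw [he] at hyS
  obtain ⟨k, hk⟩ := hyS
  exact hg2 (e k) (hk ▸ (mem_iInter.1 hy k).2)

/-- In an ultrafilter on a family closed under intersections, any member of the
family meeting every element of the ultrafilter belongs to it. -/
lemma mem_of_meets {α : Type*} {S F : Set (Set α)}
    (hS : ∀ A ∈ S, ∀ B ∈ S, A ∩ B ∈ S)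
    (hF : IsMUltrafilter S F) {A : Set α} (hA : A ∈ S)
    (hm : ∀ C ∈ F, (A ∩ C).Nonempty) : A ∈ F := by
  obtain ⟨⟨hne, hsub, hnempty, hintF, hup⟩, hmax⟩ := hF
  set G : Set (Set α) := {B ∈ S | ∃ C ∈ F, A ∩ C ⊆ B} with hG
  have hFG : F ⊆ G := fun C hC => ⟨hsub hC, C, hC, inter_subset_right⟩
  have hGfilter : IsMFilter S G := by
    refine ⟨hne.mono hFG, fun B hB => hB.1, ?_, ?_, ?_⟩
    · rintro ⟨-, C, hC, hsub'⟩
      exact (hm C hC).ne_empty (subset_empty_iff.1 hsub')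
    · rintro B ⟨hBS, C, hC, hBC⟩ B' ⟨hB'S, C', hC', hB'C'⟩
      exact ⟨hS _ hBS _ hB'S, C ∩ C', hintF _ hC _ hC',
        fun x hx => ⟨hBC ⟨hx.1, hx.2.1⟩, hB'C' ⟨hx.1, hx.2.2⟩⟩⟩
    · rintro B ⟨-, C, hC, hBC⟩ B' hB'S hBB'
      exact ⟨hB'S, C, hC, hBC.trans hBB'⟩
  have hAG : A ∈ G := ⟨hA, hne.choose, hne.choose_spec, inter_subset_left⟩
  rw [← hmax G hGfilter hFG]
  exact hAG

theorem stmt12 {Y : Type*} [MeasurableSpace Y] (X : Set Y)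
    (hco : (Xᶜ : Set Y).Countable)
    (h : ¬ ∃ F : Set (Set Y),
        IsMUltrafilter {B : Set Y | ∃ C : Set Y, MeasurableSet C ∧ B = C ∩ X} F ∧
        IsFree F ∧ HasCIP F) :
    ¬ ∃ F : Set (Set Y), IsMUltrafilter {C : Set Y | MeasurableSet C} F ∧
        IsFree F ∧ HasCIP F := by
  rintro ⟨F, hUF, hfree, hcip⟩
  obtain ⟨⟨hne, hsub, hnempty, hintF, hup⟩, hmax⟩ := hUF
  have hSint : ∀ A ∈ {C : Set Y | MeasurableSet C}, ∀ B ∈ {C : Set Y | MeasurableSet C},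
      A ∩ B ∈ {C : Set Y | MeasurableSet C} := fun A hA B hB => hA.inter hB
  -- every member of F meets X
  have hmeet : ∀ C ∈ F, (C ∩ X).Nonempty := by
    intro C hC
    by_contra hne'
    have hsubX : C ⊆ Xᶜ := by
      intro x hx hxX
      exact hne' ⟨x, hx, hxX⟩
    exact aux_cip hfree hcip hintF (fun _ => C) (fun _ => hC)
      (by rw [Set.iInter_const]; exact hco.mono hsubX)
  -- the trace filter
  set G : Set (Set Y) := {B | ∃ C ∈ F, B = C ∩ X} with hGdef
  apply h
  refine ⟨G, ⟨⟨?_, ?_, ?_, ?_, ?_⟩, ?_⟩, ?_, ?_⟩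
  · obtain ⟨C, hC⟩ := hne
    exact ⟨C ∩ X, C, hC, rfl⟩
  · rintro B ⟨C, hC, rfl⟩
    exact ⟨C, hsub hC, rfl⟩
  · rintro ⟨C, hC, hCeq⟩
    exact (hmeet C hC).ne_empty hCeq.symm
  · rintro B ⟨C, hC, rfl⟩ B' ⟨C', hC', rfl⟩
    exact ⟨C ∩ C', hintF _ hC _ hC', by rw [inter_inter_inter_comm, inter_self]⟩
  · rintro B ⟨C, hC, rfl⟩ B' ⟨D, hD, rfl⟩ hBB'
    refine ⟨D, mem_of_meets hSint ⟨⟨hne, hsub, hnempty, hintF, hup⟩, hmax⟩ hD ?_, rfl⟩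
    intro E hE
    obtain ⟨x, ⟨hxE, hxC⟩, hxX⟩ := hmeet (E ∩ C) (hintF _ hE _ hC)
    exact ⟨x, (hBB' ⟨hxC, hxX⟩).1, hxE⟩
  · -- maximality
    rintro H ⟨Hne, Hsub, Hnempty, HintH, Hup⟩ hGH
    refine Set.Subset.antisymm ?_ hGH
    intro B hB
    obtain ⟨D, hDmeas, rfl⟩ := Hsub hB
    refine ⟨D, mem_of_meets hSint ⟨⟨hne, hsub, hnempty, hintF, hup⟩, hmax⟩ hDmeas ?_, rfl⟩
    intro E hE
    have hEX : E ∩ X ∈ H := hGH ⟨E, hE, rfl⟩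
    have : (D ∩ X) ∩ (E ∩ X) ∈ H := HintH _ hB _ hEX
    rcases eq_empty_or_nonempty ((D ∩ X) ∩ (E ∩ X)) with heq | ⟨x, hx⟩
    · exact absurd (heq ▸ this) Hnempty
    · exact ⟨x, hx.1.1, hx.2.1⟩
  · -- free
    rw [IsFree, eq_empty_iff_forall_notMem]
    intro y hy
    have : y ∈ ⋂₀ F := by
      intro C hC
      exact ((mem_sInter.1 hy) (C ∩ X) ⟨C, hC, rfl⟩).1
    rw [hfree] at this
    exact this
  · -- CIP
    intro f hf
    choose c hc1 hc2 using hf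
    by_contra hemp
    rw [not_nonempty_iff_eq_empty] at hemp
    have hsubX : (⋂ n, c n) ⊆ Xᶜ := by
      intro x hx hxX
      have : x ∈ ⋂ n, f n := mem_iInter.2 fun n =>
        (hc2 n) ▸ (⟨mem_iInter.1 hx n, hxX⟩ : x ∈ c n ∩ X)
      rw [hemp] at this; exact this
    exact aux_cip hfree hcip hintF c hc1 (hco.mono hsubX)
end

section
/- Let (X, 𝓑) and (Y, 𝓒) be measurable spaces with singletons measurable, let 𝓕 be a free ultrafilter in 𝓑 with the countable intersection property, and fix y ∈ Y. Then any ultrafilter 𝓗 in the product σ-algebra 𝓑 × 𝓒 containing {F × {y} : F ∈ 𝓕} is free and has the countable intersection property. -/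
open Set MeasureTheory

theorem stmt14 {X Y : Type*} [MeasurableSpace X] [MeasurableSpace Y]
    [MeasurableSingletonClass X] [MeasurableSingletonClass Y]
    (F : Set (Set X)) (hF : IsMUltrafilter {B : Set X | MeasurableSet B} F)
    (hfree : IsFree F) (hcip : HasCIP F) (y : Y)
    (H : Set (Set (X × Y)))
    (hH : IsMUltrafilter {s : Set (X × Y) | MeasurableSet s} H)
    (hsub : ∀ A ∈ F, A ×ˢ ({y} : Set Y) ∈ H) :
    IsFree H ∧ HasCIP H := by
  obtain ⟨⟨hFne, hFS, hFne', hFinter, hFup⟩, hFmax⟩ := hF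
  obtain ⟨⟨hHne, hHS, hHne', hHinter, hHup⟩, _⟩ := hH
  -- ultrafilter dichotomy for F
  have dich : ∀ B : Set X, MeasurableSet B → B ∈ F ∨ Bᶜ ∈ F := by
    intro B hB
    by_cases hc : ∃ A ∈ F, A ∩ B = ∅
    · obtain ⟨A, hA, hAB⟩ := hc
      exact Or.inr (hFup A hA Bᶜ hB.compl fun x hx hxB =>
        (eq_empty_iff_forall_notMem.1 hAB x ⟨hx, hxB⟩))
    · push_neg at hc
      left
      set G : Set (Set X) := {C | MeasurableSet C ∧ ∃ A ∈ F, A ∩ B ⊆ C} with hG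
      have hFG : F ⊆ G := fun A hA => ⟨hFS hA, A, hA, inter_subset_left⟩
      have hBG : B ∈ G := by
        obtain ⟨A, hA⟩ := hFne
        exact ⟨hB, A, hA, inter_subset_right⟩
      have hGfil : IsMFilter {B : Set X | MeasurableSet B} G := by
        refine ⟨⟨B, hBG⟩, fun C hC => hC.1, ?_, ?_, ?_⟩
        · rintro ⟨-, A, hA, hAB⟩
          exact (hc A hA).ne_empty (subset_empty_iff.1 hAB)
        · rintro C1 ⟨h1, A1, hA1, hs1⟩ C2 ⟨h2, A2, hA2, hs2⟩
          exact ⟨h1.inter h2, A1 ∩ A2, hFinter A1 hA1 A2 hA2,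
            fun x hx => ⟨hs1 ⟨hx.1.1, hx.2⟩, hs2 ⟨hx.1.2, hx.2⟩⟩⟩
        · rintro C ⟨h1, A, hA, hs⟩ D hD hCD
          exact ⟨hD, A, hA, hs.trans hCD⟩
      have := hFmax G hGfil hFG
      rw [← this]; exact hBG
  -- sections of members of H lie in F
  have sec : ∀ S ∈ H, {x : X | (x, y) ∈ S} ∈ F := by
    intro S hS
    have hSm : MeasurableSet S := hHS hS
    have hsecm : MeasurableSet {x : X | (x, y) ∈ S} :=
      hSm.preimage (measurable_prodMk_right)
    rcases dich _ hsecm with h | h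
    · exact h
    · exfalso
      have h1 : {x : X | (x, y) ∈ S}ᶜ ×ˢ ({y} : Set Y) ∈ H := hsub _ h
      have h2 := hHinter _ h1 _ hS
      apply hHne'
      have : ({x : X | (x, y) ∈ S}ᶜ ×ˢ ({y} : Set Y)) ∩ S = ∅ := by
        ext ⟨x, y'⟩
        simp only [mem_inter_iff, mem_prod, mem_singleton_iff, mem_empty_iff_false,
          iff_false, not_and, mem_compl_iff, mem_setOf_eq, and_imp]
        rintro hx rfl hxy
        exact hx hxy
      rwa [this] at h2
  constructor
  · -- free
    rw [IsFree, eq_empty_iff_forall_notMem]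
    rintro ⟨x, y'⟩ hxy
    obtain ⟨A, hA⟩ := hFne
    have hy' : y' = y := by
      have := hxy _ (hsub A hA)
      exact this.2
    subst hy'
    have hx : x ∈ ⋂₀ F := by
      intro A hA
      exact (hxy _ (hsub A hA)).1
    rw [hfree] at hx
    exact hx
  · -- CIP
    intro f hf
    obtain ⟨x, hx⟩ := hcip (fun n => {x : X | (x, y) ∈ f n}) (fun n => sec _ (hf n))
    exact ⟨(x, y), mem_iInter.2 fun n => (mem_iInter.1 hx n : _)⟩
end

section
/- Let X be a completely regular topological space and B ⊆ X a subset whose boundary bd_X B is compact. Then cl_{βX} B \ X = Ex_X(int_X B) \ X, where Ex_X U = βX \ cl_{βX}(X \ U). -/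
open Set

open scoped Classical in
lemma keyLemma18 {X : Type*} [TopologicalSpace X] (U : Set X) (hU : IsOpen U)
    (hF : IsCompact (frontier U)) {q : StoneCech X}
    (hq1 : q ∈ closure (stoneCechUnit '' U))
    (hq2 : q ∈ closure (stoneCechUnit '' Uᶜ)) :
    q ∈ stoneCechUnit '' frontier U := by
  by_contra hq
  set u : X → StoneCech X := stoneCechUnit with hu
  have hKc : IsCompact (u '' frontier U) := hF.image continuous_stoneCechUnit
  have hKcl : IsClosed (u '' frontier U) := hKc.isClosed
  obtain ⟨f, hf0, hf1, hf01⟩ := exists_continuous_zero_one_of_isClosed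
    (isClosed_singleton (x := q)) hKcl (disjoint_singleton_left.mpr hq)
  set g : X → ℝ := fun x => f (u x) with hg
  have hgF : ∀ x ∈ frontier U, g x = 1 := fun x hx => hf1 (mem_image_of_mem u hx)
  -- the open neighborhood of q
  set V : Set (StoneCech X) := {p | f p < 1/2} with hV
  have hVopen : IsOpen V := isOpen_lt f.continuous continuous_const
  have hqV : q ∈ V := by
    have h0 : f q = 0 := hf0 rfl
    simp only [hV, mem_setOf_eq, h0]
    norm_num
  -- q is in the closure of u '' (S ∩ {g < 1/2}) for S = U, Uᶜ
  have key : ∀ S : Set X, q ∈ closure (u '' S) →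
      q ∈ closure (u '' (S ∩ {x | g x < 1/2})) := by
    intro S hS
    have h1 : q ∈ V ∩ closure (u '' S) := ⟨hqV, hS⟩
    have h2 := hVopen.inter_closure h1
    have h3 : V ∩ u '' S ⊆ u '' (S ∩ {x | g x < 1/2}) := by
      rintro p ⟨hpV, x, hxS, rfl⟩
      exact ⟨x, ⟨hxS, hpV⟩, rfl⟩
    exact closure_mono h3 h2
  have hqA1 := key U hq1
  have hqA2 := key Uᶜ hq2
  -- the separating function φ
  set φ : X → ℝ := (closure U).piecewise g (fun x => 2 - g x) with hφ
  have hgcont : Continuous g := f.continuous.comp continuous_stoneCechUnit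
  have hφcont : Continuous φ := by
    refine Continuous.piecewise ?_ hgcont (continuous_const.sub hgcont)
    intro x hx
    have hx' : x ∈ frontier U := frontier_closure_subset hx
    rw [hgF x hx']; norm_num
  -- θ : X → Icc 0 2
  have h02 : (0:ℝ) ≤ 2 := by norm_num
  set θ : X → Icc (0:ℝ) 2 := fun x => projIcc 0 2 h02 (φ x) with hθ
  have hθcont : Continuous θ := continuous_projIcc.comp hφcont
  set Φ := stoneCechExtend hθcont with hΦ
  have hΦu : ∀ x, Φ (u x) = θ x := fun x => congrFun (stoneCechExtend_extends hθcont) x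
  -- Φ q ≤ 1/2 from A₁
  have hle : (Φ q : ℝ) ≤ 1/2 := by
    have hclosed : IsClosed {p : StoneCech X | (Φ p : ℝ) ≤ 1/2} :=
      isClosed_le (continuous_subtype_val.comp (continuous_stoneCechExtend hθcont))
        continuous_const
    have hsub : u '' (U ∩ {x | g x < 1/2}) ⊆ {p | (Φ p : ℝ) ≤ 1/2} := by
      rintro p ⟨x, ⟨hxU, hxg⟩, rfl⟩
      have hφx : φ x = g x := Set.piecewise_eq_of_mem _ _ _ (subset_closure hxU)
      have hcoe : (Φ (u x) : ℝ) = max 0 (min 2 (φ x)) := by rw [hΦu x]; rfl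
      simp only [mem_setOf_eq, hcoe, hφx, max_le_iff]
      refine ⟨by norm_num, le_trans (min_le_right _ _) (le_of_lt (show g x < 1/2 from hxg))⟩
    exact closure_minimal hsub hclosed hqA1
  -- Φ q ≥ 3/2 from A₂
  have hge : (3/2 : ℝ) ≤ (Φ q : ℝ) := by
    have hclosed : IsClosed {p : StoneCech X | (3/2 : ℝ) ≤ (Φ p : ℝ)} :=
      isClosed_le continuous_const
        (continuous_subtype_val.comp (continuous_stoneCechExtend hθcont))
    have hsub : u '' (Uᶜ ∩ {x | g x < 1/2}) ⊆ {p | (3/2 : ℝ) ≤ (Φ p : ℝ)} := by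
      rintro p ⟨x, ⟨hxU, hxg⟩, rfl⟩
      have hxg' : g x < 1/2 := hxg
      have hxcl : x ∉ closure U := by
        intro hxc
        have hxf : x ∈ frontier U := ⟨hxc, by simpa [hU.interior_eq] using hxU⟩
        have h1 := hgF x hxf
        rw [h1] at hxg'; norm_num at hxg'
      have hφx : φ x = 2 - g x := Set.piecewise_eq_of_notMem _ _ _ hxcl
      have hcoe : (Φ (u x) : ℝ) = max 0 (min 2 (φ x)) := by rw [hΦu x]; rfl
      have hg0 : 0 ≤ g x := (hf01 (u x)).1
      simp only [mem_setOf_eq, hcoe, hφx]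
      have h1 : (3/2 : ℝ) ≤ min 2 (2 - g x) := by
        have : (3/2 : ℝ) ≤ 2 - g x := by linarith [hxg']
        exact le_min (by norm_num) this
      exact le_trans h1 (le_max_right _ _)
    exact closure_minimal hsub hclosed hqA2
  linarith

theorem stmt18 {X : Type*} [TopologicalSpace X] [CompletelyRegularSpace X] [T2Space X]
    (B : Set X) (hB : IsCompact (frontier B)) :
    closure (stoneCechUnit '' B) \ Set.range (stoneCechUnit : X → StoneCech X) =
      (closure (stoneCechUnit '' (interior B)ᶜ))ᶜ \ Set.range stoneCechUnit := by
  set u : X → StoneCech X := stoneCechUnit with hu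
  set U : Set X := interior B with hUdef
  have hFU : IsCompact (frontier U) :=
    hB.of_isClosed_subset isClosed_frontier frontier_interior_subset
  ext q
  simp only [mem_diff, mem_compl_iff]
  constructor
  · rintro ⟨hqB, hqR⟩
    refine ⟨?_, hqR⟩
    intro hq2
    -- q ∈ closure (u '' U)
    have hsub : u '' B ⊆ u '' U ∪ u '' frontier B := by
      rw [← image_union]
      exact image_mono (f := u) (fun x hx => by
        rcases em (x ∈ U) with h | h
        · exact Or.inl h
        · exact Or.inr ⟨subset_closure hx, h⟩)
    have hcl : q ∈ closure (u '' U) ∪ u '' frontier B := by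
      have h1 := closure_mono hsub hqB
      rw [closure_union, (hB.image continuous_stoneCechUnit).isClosed.closure_eq] at h1
      exact h1
    have hqU : q ∈ closure (u '' U) := by
      rcases hcl with h | h
      · exact h
      · exact absurd (image_subset_range u _ h) hqR
    have := keyLemma18 U isOpen_interior hFU hqU hq2
    exact hqR (image_subset_range u _ this)
  · rintro ⟨hq2, hqR⟩
    refine ⟨?_, hqR⟩
    have huniv : closure (u '' U) ∪ closure (u '' Uᶜ) = univ := by
      rw [← closure_union, ← image_union, union_compl_self, image_univ]
      exact denseRange_stoneCechUnit.closure_range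
    have hqU : q ∈ closure (u '' U) := by
      have : q ∈ closure (u '' U) ∪ closure (u '' Uᶜ) := huniv ▸ mem_univ q
      rcases this with h | h
      · exact h
      · exact absurd h hq2
    exact closure_mono (image_mono (f := u) interior_subset) hqU
end
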